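/- Let 1 < q < p < r, A > 0, B > 0, C ≤ 0, and Φ(t) = (t^p/p)A - (t^q/q)C - (t^r/r)B for t > 0. Then Φ has a unique critical point t₃ > 0 in (0,∞), and Φ''(t₃) < 0 (so t₃ is a local maximum). -/

import Mathlib

open Real

theorem stmt_17 (p q r A B C : ℝ) (hq : 1 < q) (hqp : q < p) (hpr : p < r)
    (hA : 0 < A) (hB : 0 < B) (hC : C ≤ 0) :
    let Φ : ℝ → ℝ := fun t => t ^ p / p * A - t ^ q / q * C - t ^ r / r * B
    ∃ t₃ : ℝ, 0 < t₃ ∧ deriv Φ t₃ = 0 ∧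
      (∀ t : ℝ, 0 < t → deriv Φ t = 0 → t = t₃) ∧
      deriv (deriv Φ) t₃ < 0 := by
  intro Φ
  have hp1 : (1:ℝ) < p := hq.trans hqp
  have hr1 : (1:ℝ) < r := hp1.trans hpr
  have hp0 : p ≠ 0 := by linarith
  have hq0 : q ≠ 0 := by linarith
  have hr0 : r ≠ 0 := by linarith
  set F : ℝ → ℝ := fun t => t ^ (p-1) * A - t ^ (q-1) * C - t ^ (r-1) * B with hF
  have hderiv : ∀ t : ℝ, 0 < t → HasDerivAt Φ (F t) t := by
    intro t ht
    have h1 := ((Real.hasDerivAt_rpow_const (p := p) (x := t) (Or.inl ht.ne')).div_const p).mul_const A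
    have h2 := ((Real.hasDerivAt_rpow_const (p := q) (x := t) (Or.inl ht.ne')).div_const q).mul_const C
    have h3 := ((Real.hasDerivAt_rpow_const (p := r) (x := t) (Or.inl ht.ne')).div_const r).mul_const B
    have h4 := (h1.sub h2).sub h3
    convert h4 using 1
    any_goals rfl
    rw [mul_div_cancel_left₀ _ hp0, mul_div_cancel_left₀ _ hq0, mul_div_cancel_left₀ _ hr0]
  have hderivΦ : ∀ t : ℝ, 0 < t → deriv Φ t = F t := fun t ht => (hderiv t ht).deriv
  set g : ℝ → ℝ := fun t => A - C * t ^ (q-p) - B * t ^ (r-p) with hg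
  have hFg : ∀ t : ℝ, 0 < t → F t = t ^ (p-1) * g t := by
    intro t ht
    have e1 : t ^ (p-1) * t ^ (q-p) = t ^ (q-1) := by
      rw [← Real.rpow_add ht]; ring_nf
    have e2 : t ^ (p-1) * t ^ (r-p) = t ^ (r-1) := by
      rw [← Real.rpow_add ht]; ring_nf
    simp only [hF, hg]
    rw [← e1, ← e2]; ring
  have hgd : ∀ t : ℝ, 0 < t →
      HasDerivAt g (0 - C * ((q-p) * t ^ (q-p-1)) - B * ((r-p) * t ^ (r-p-1))) t := by
    intro t ht
    have h1 := (Real.hasDerivAt_rpow_const (p := q-p) (x := t) (Or.inl ht.ne')).const_mul C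
    have h2 := (Real.hasDerivAt_rpow_const (p := r-p) (x := t) (Or.inl ht.ne')).const_mul B
    exact ((hasDerivAt_const t A).sub h1).sub h2
  have hanti : StrictAntiOn g (Set.Ioi 0) := by
    apply strictAntiOn_of_deriv_neg (convex_Ioi 0)
    · exact fun t ht => (hgd t ht).continuousAt.continuousWithinAt
    · intro x hx
      rw [interior_Ioi] at hx
      rw [(hgd x hx).deriv]
      have hX := Real.rpow_pos_of_pos hx (q-p-1)
      have hY := Real.rpow_pos_of_pos hx (r-p-1)
      have h1 : 0 ≤ C * (q-p) := by nlinarith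
      nlinarith [mul_pos (mul_pos hB (by linarith : (0:ℝ) < r - p)) hY,
        mul_nonneg h1 hX.le]
  -- existence of a zero of g
  set a : ℝ := min 1 ((A/(2*B)) ^ (r-p)⁻¹) with ha
  have ha0 : 0 < a := lt_min one_pos (Real.rpow_pos_of_pos (by positivity) _)
  have harp : a ^ (r-p) ≤ A/(2*B) := by
    calc a ^ (r-p) ≤ ((A/(2*B)) ^ (r-p)⁻¹) ^ (r-p) :=
          Real.rpow_le_rpow ha0.le (min_le_right _ _) (by linarith)
      _ = A/(2*B) := Real.rpow_inv_rpow (by positivity) (by intro h; exact absurd h (by linarith))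
  have hga : 0 < g a := by
    have h1 : 0 ≤ (-C) * a ^ (q-p) :=
      mul_nonneg (neg_nonneg.2 hC) (Real.rpow_pos_of_pos ha0 _).le
    have h2 : B * a ^ (r-p) ≤ B * (A/(2*B)) := mul_le_mul_of_nonneg_left harp hB.le
    have h3 : B * (A/(2*B)) = A/2 := by field_simp
    simp only [hg]
    nlinarith
  set b : ℝ := max (a+1) (((A - C + 1)/B) ^ (r-p)⁻¹) with hb
  have hab : a < b := lt_of_lt_of_le (lt_add_one a) (le_max_left _ _)
  have hb1 : 1 ≤ b := by
    have := le_max_left (a+1) (((A - C + 1)/B) ^ (r-p)⁻¹)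
    linarith
  have hbq : b ^ (q-p) ≤ 1 := Real.rpow_le_one_of_one_le_of_nonpos hb1 (by linarith)
  have hbr : (A - C + 1)/B ≤ b ^ (r-p) := by
    calc (A - C + 1)/B = (((A - C + 1)/B) ^ (r-p)⁻¹) ^ (r-p) :=
          (Real.rpow_inv_rpow (div_nonneg (by linarith) hB.le) (by intro h; exact absurd h (by linarith))).symm
      _ ≤ b ^ (r-p) := Real.rpow_le_rpow (Real.rpow_nonneg (div_nonneg (by linarith) hB.le) _) (le_max_right _ _) (by linarith)
  have hgb : g b < 0 := by
    have h1 : (-C) * b ^ (q-p) ≤ (-C) * 1 :=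
      mul_le_mul_of_nonneg_left hbq (neg_nonneg.2 hC)
    have h2 : B * ((A - C + 1)/B) ≤ B * b ^ (r-p) := mul_le_mul_of_nonneg_left hbr hB.le
    have h3 : B * ((A - C + 1)/B) = A - C + 1 := by field_simp
    simp only [hg]
    nlinarith
  have hcont : ContinuousOn g (Set.Icc a b) := by
    apply ContinuousOn.mono (fun t ht => (hgd t ht).continuousAt.continuousWithinAt)
    intro x hx
    exact lt_of_lt_of_le ha0 hx.1
  obtain ⟨t₃, ht₃mem, ht₃⟩ := intermediate_value_Icc' hab.le hcont ⟨hgb.le, hga.le⟩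
  have ht₃pos : 0 < t₃ := lt_of_lt_of_le ha0 ht₃mem.1
  refine ⟨t₃, ht₃pos, ?_, ?_, ?_⟩
  · rw [hderivΦ _ ht₃pos, hFg _ ht₃pos, ht₃, mul_zero]
  · intro t ht htd
    rw [hderivΦ _ ht, hFg _ ht] at htd
    have hgt : g t = 0 :=
      (mul_eq_zero.1 htd).resolve_left (Real.rpow_pos_of_pos ht (p-1)).ne'
    exact hanti.injOn ht ht₃pos (hgt.trans ht₃.symm)
  · have hev : deriv Φ =ᶠ[nhds t₃] F := by
      filter_upwards [isOpen_Ioi.mem_nhds ht₃pos] with x hx using hderivΦ x hx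
    rw [hev.deriv_eq]
    have h1 := (Real.hasDerivAt_rpow_const (p := p-1) (x := t₃) (Or.inl ht₃pos.ne')).mul_const A
    have h2 := (Real.hasDerivAt_rpow_const (p := q-1) (x := t₃) (Or.inl ht₃pos.ne')).mul_const C
    have h3 := (Real.hasDerivAt_rpow_const (p := r-1) (x := t₃) (Or.inl ht₃pos.ne')).mul_const B
    have hF' : HasDerivAt F ((p-1) * t₃ ^ (p-1-1) * A - (q-1) * t₃ ^ (q-1-1) * C
        - (r-1) * t₃ ^ (r-1-1) * B) t₃ := (h1.sub h2).sub h3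
    rw [hF'.deriv]
    set X := t₃ ^ (p-1-1) with hX
    set Y := t₃ ^ (q-1-1) with hY
    set Z := t₃ ^ (r-1-1) with hZ
    have hXpos : 0 < X := Real.rpow_pos_of_pos ht₃pos _
    have hYpos : 0 < Y := Real.rpow_pos_of_pos ht₃pos _
    have e1 : t₃ ^ (q-p) * X = Y := by
      rw [hX, hY, ← Real.rpow_add ht₃pos]; ring_nf
    have e2 : t₃ ^ (r-p) * X = Z := by
      rw [hX, hZ, ← Real.rpow_add ht₃pos]; ring_nf
    have hA' : A = C * t₃ ^ (q-p) + B * t₃ ^ (r-p) := by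
      have h0 : A - C * t₃ ^ (q-p) - B * t₃ ^ (r-p) = 0 := ht₃
      linarith
    have key : A * X = C * Y + B * Z := by
      calc A * X = C * (t₃ ^ (q-p) * X) + B * (t₃ ^ (r-p) * X) := by rw [hA']; ring
        _ = C * Y + B * Z := by rw [e1, e2]
    have hrw : (p-1) * X * A - (q-1) * Y * C - (r-1) * Z * B
        = (p-r) * (A * X) + (r-q) * (C * Y) := by linear_combination (r-1) * key
    rw [hrw]
    have hh1 : (p-r) * (A * X) < 0 :=
      mul_neg_of_neg_of_pos (by linarith) (mul_pos hA hXpos)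
    have hh2 : (r-q) * (C * Y) ≤ 0 :=
      mul_nonpos_of_nonneg_of_nonpos (by linarith)
        (mul_nonpos_of_nonpos_of_nonneg hC hYpos.le)
    linarith
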